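/- Let F₁^{σ₁}, F₂^{σ₂} be turbofunctions with σ₁, σ₂ strictly increasing. If ρ⁺(F₁^{σ₁}, F₂^{σ₂}) = 0, then there exists an increasing homeomorphism γ of [0,1] with F₂ = F₁ ∘ γ and σ₂ = σ₁ ∘ γ; indeed γ = σ₁⁻¹ ∘ σ₂ works. -/

import Mathlib

open Filter

/-- A càdlàg function on `[0,1]`: right-continuous on `[0,1)`, left limits on `(0,1]`. -/
def Cadlag (f : unitInterval → ℝ) : Prop :=
  (∀ t : unitInterval, (t : ℝ) < 1 →
    Filter.Tendsto f (nhdsWithin t (Set.Ioi t)) (nhds (f t))) ∧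
  (∀ t : unitInterval, 0 < (t : ℝ) →
    ∃ l : ℝ, Filter.Tendsto f (nhdsWithin t (Set.Iio t)) (nhds l))

/-- Increasing homeomorphism of `[0,1]` onto itself. -/
def IsIncHomeo (γ : unitInterval → unitInterval) : Prop :=
  Continuous γ ∧ StrictMono γ ∧ Function.Bijective γ

/-- `Σ`: continuous non-decreasing surjections of `[0,1]` onto itself. -/
def InSigma (σ : unitInterval → unitInterval) : Prop :=
  Continuous σ ∧ Monotone σ ∧ Function.Surjective σ

/-- Skorokhod distance on functions on `[0,1]`. -/
noncomputable def skorokhodDist (f g : unitInterval → ℝ) : ℝ :=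
  sInf { c : ℝ | ∃ γ : unitInterval → unitInterval, IsIncHomeo γ ∧
    (⨆ s : unitInterval, |f s - g (γ s)|) + (⨆ s : unitInterval, |(s : ℝ) - (γ s : ℝ)|) = c }

/-- Extended Skorokhod semi-distance on turbofunctions. -/
noncomputable def rhoPlus (P Q : (unitInterval → ℝ) × (unitInterval → unitInterval)) : ℝ :=
  sInf { c : ℝ | ∃ γ : unitInterval → unitInterval, IsIncHomeo γ ∧
    (⨆ t : unitInterval, |P.1 (γ t) - Q.1 t|) +
    (⨆ t : unitInterval, |(P.2 (γ t) : ℝ) - (Q.2 t : ℝ)|) = c }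

instance : Fact ((0:ℝ) ≤ 1) := ⟨zero_le_one⟩

/-- Right-continuous inverse `σ⁻¹(s) = max {t : σ t ≤ s}` (as a supremum). -/
noncomputable def rcInv (σ : unitInterval → unitInterval) (s : unitInterval) : unitInterval :=
  sSup {t : unitInterval | σ t ≤ s}

lemma Ioi_one_empty' : Set.Ioi (1 : unitInterval) = ∅ := by
  ext y
  simp only [Set.mem_Ioi, Set.mem_empty_iff_false, iff_false, not_lt]
  exact Subtype.coe_le_coe.mp (by simpa using y.2.2)

lemma Iio_zero_empty' : Set.Iio (0 : unitInterval) = ∅ := by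
  ext y
  simp only [Set.mem_Iio, Set.mem_empty_iff_false, iff_false, not_lt]
  exact Subtype.coe_le_coe.mp (by simpa using y.2.1)

lemma cadlag_right_seq (f : unitInterval → ℝ) (hf : Cadlag f) (x : unitInterval)
    (u : ℕ → unitInterval) (hu : ∀ n, x ≤ u n)
    (hlim : Filter.Tendsto u atTop (nhds x)) :
    Filter.Tendsto (fun n => f (u n)) atTop (nhds (f x)) := by
  have hIoi : Filter.Tendsto f (nhdsWithin x (Set.Ioi x)) (nhds (f x)) := by
    rcases lt_or_eq_of_le x.2.2 with hx | hx
    · exact hf.1 x hx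
    · have hx1 : x = 1 := Subtype.ext hx
      rw [hx1, Ioi_one_empty', nhdsWithin_empty]
      exact tendsto_bot
  have hIci : Filter.Tendsto f (nhdsWithin x (Set.Ici x)) (nhds (f x)) := by
    rw [← Set.Ioi_insert, nhdsWithin_insert]
    exact Filter.Tendsto.sup (tendsto_pure_nhds f x) hIoi
  exact hIci.comp (tendsto_nhdsWithin_iff.mpr ⟨hlim, Filter.Eventually.of_forall hu⟩)

lemma cadlag_bdd (f : unitInterval → ℝ) (hf : Cadlag f) : ∃ M : ℝ, ∀ t, |f t| ≤ M := by
  classical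
  have hloc : ∀ x : unitInterval, ∃ M, ∀ᶠ s in nhds x, |f s| ≤ M := by
    intro x
    have hr : ∃ Mr, ∀ᶠ s in nhdsWithin x (Set.Ioi x), |f s| ≤ Mr := by
      rcases lt_or_eq_of_le x.2.2 with hx | hx
      · refine ⟨|f x| + 1, ?_⟩
        have h1 := Metric.tendsto_nhds.mp (hf.1 x hx) 1 one_pos
        refine h1.mono fun s hs => ?_
        rw [Real.dist_eq] at hs
        calc |f s| = |f s - f x + f x| := by ring_nf
          _ ≤ |f s - f x| + |f x| := abs_add_le _ _
          _ ≤ |f x| + 1 := by linarith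
      · refine ⟨0, ?_⟩
        have hx1 : x = 1 := Subtype.ext hx
        rw [hx1, Ioi_one_empty', nhdsWithin_empty]
        exact Filter.eventually_bot
    have hl : ∃ Ml, ∀ᶠ s in nhdsWithin x (Set.Iio x), |f s| ≤ Ml := by
      rcases lt_or_eq_of_le x.2.1 with hx | hx
      · obtain ⟨l, hl⟩ := hf.2 x hx
        refine ⟨|l| + 1, ?_⟩
        have h1 := Metric.tendsto_nhds.mp hl 1 one_pos
        refine h1.mono fun s hs => ?_
        rw [Real.dist_eq] at hs
        calc |f s| = |f s - l + l| := by ring_nf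
          _ ≤ |f s - l| + |l| := abs_add_le _ _
          _ ≤ |l| + 1 := by linarith
      · refine ⟨0, ?_⟩
        have hx0 : x = 0 := Subtype.ext hx.symm
        rw [hx0, Iio_zero_empty', nhdsWithin_empty]
        exact Filter.eventually_bot
    obtain ⟨Mr, hMr⟩ := hr
    obtain ⟨Ml, hMl⟩ := hl
    refine ⟨max (max Mr Ml) |f x|, ?_⟩
    have hx : nhds x = nhdsWithin x (Set.Iio x) ⊔ (pure x ⊔ nhdsWithin x (Set.Ioi x)) := by
      rw [← nhdsWithin_insert, ← nhdsWithin_union, Set.Ioi_insert, Set.Iio_union_Ici,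
        nhdsWithin_univ]
    rw [hx, Filter.eventually_sup, Filter.eventually_sup]
    refine ⟨hMl.mono fun s hs => ?_, ?_, hMr.mono fun s hs => ?_⟩
    · exact hs.trans ((le_max_right Mr Ml).trans (le_max_left _ _))
    · rw [Filter.eventually_pure]
      exact le_max_right _ _
    · exact hs.trans ((le_max_left Mr Ml).trans (le_max_left _ _))
  choose M hM using hloc
  obtain ⟨tfin, -, hcov⟩ := isCompact_univ.elim_nhds_subcover
    (fun x => {s | |f s| ≤ M x}) (fun x _ => hM x)
  obtain ⟨B, hB⟩ := (tfin.finite_toSet.image M).bddAbove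
  refine ⟨B, fun t => ?_⟩
  have ht := hcov (Set.mem_univ t)
  simp only [Set.mem_iUnion, Set.mem_setOf_eq] at ht
  obtain ⟨x, hx, hxt⟩ := ht
  exact hxt.trans (hB (Set.mem_image_of_mem M hx))

lemma tendsto_unit_of_abs_le (u : ℕ → unitInterval) (x : unitInterval)
    (h : ∀ n : ℕ, |(u n : ℝ) - (x : ℝ)| ≤ 1 / (n + 1)) :
    Filter.Tendsto u atTop (nhds x) := by
  rw [Topology.IsEmbedding.subtypeVal.tendsto_nhds_iff]
  have h0 : Filter.Tendsto (fun n : ℕ => |(u n : ℝ) - (x : ℝ)|) atTop (nhds 0) :=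
    squeeze_zero (fun n => abs_nonneg _) h tendsto_one_div_add_atTop_nhds_zero_nat
  have h1 : Filter.Tendsto (fun n : ℕ => (u n : ℝ) - (x : ℝ)) atTop (nhds 0) :=
    squeeze_zero_norm (fun n => le_refl _) h0
  have := h1.add_const (x : ℝ)
  simpa [Function.comp_def] using this

theorem rhoPlus_zero_implies_homeo_equiv (F₁ F₂ : unitInterval → ℝ)
    (σ₁ σ₂ : unitInterval → unitInterval)
    (hF₁ : Cadlag F₁) (hF₂ : Cadlag F₂) (hσ₁ : InSigma σ₁) (hσ₂ : InSigma σ₂)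
    (hs₁ : StrictMono σ₁) (hs₂ : StrictMono σ₂)
    (h : rhoPlus (F₁, σ₁) (F₂, σ₂) = 0) :
    ∃ γ : unitInterval → unitInterval, IsIncHomeo γ ∧ F₂ = F₁ ∘ γ ∧ σ₂ = σ₁ ∘ γ := by
  classical
  obtain ⟨M₁, hM₁⟩ := cadlag_bdd F₁ hF₁
  obtain ⟨M₂, hM₂⟩ := cadlag_bdd F₂ hF₂
  -- extract approximating homeomorphisms
  have key : ∀ n : ℕ, ∃ γ' : unitInterval → unitInterval, IsIncHomeo γ' ∧
      (∀ s, |F₁ (γ' s) - F₂ s| ≤ 1 / (n + 1)) ∧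
      (∀ s, |(σ₁ (γ' s) : ℝ) - (σ₂ s : ℝ)| ≤ 1 / (n + 1)) := by
    intro n
    unfold rhoPlus at h
    set S : Set ℝ := { c : ℝ | ∃ γ : unitInterval → unitInterval, IsIncHomeo γ ∧
      (⨆ t : unitInterval, |F₁ (γ t) - F₂ t|) +
      (⨆ t : unitInterval, |(σ₁ (γ t) : ℝ) - (σ₂ t : ℝ)|) = c } with hS
    have hne : S.Nonempty :=
      ⟨_, id, ⟨continuous_id, strictMono_id, Function.bijective_id⟩, rfl⟩
    have hbd : BddBelow S := by
      refine ⟨0, ?_⟩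
      rintro c ⟨γ', hγ', rfl⟩
      exact add_nonneg (Real.iSup_nonneg fun s => abs_nonneg _)
        (Real.iSup_nonneg fun s => abs_nonneg _)
    have h0 : sInf S < 1 / (n + 1) := by
      rw [show sInf S = 0 from h]
      positivity
    obtain ⟨c, ⟨γ', hγ', hc⟩, hlt⟩ := (csInf_lt_iff hbd hne).mp h0
    have hA0 : 0 ≤ ⨆ t : unitInterval, |F₁ (γ' t) - F₂ t| :=
      Real.iSup_nonneg fun s => abs_nonneg _
    have hB0 : 0 ≤ ⨆ t : unitInterval, |(σ₁ (γ' t) : ℝ) - (σ₂ t : ℝ)| :=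
      Real.iSup_nonneg fun s => abs_nonneg _
    have hAb : BddAbove (Set.range fun s : unitInterval => |F₁ (γ' s) - F₂ s|) := by
      refine ⟨M₁ + M₂, ?_⟩
      rintro y ⟨s, rfl⟩
      calc |F₁ (γ' s) - F₂ s| ≤ |F₁ (γ' s)| + |F₂ s| := abs_sub _ _
        _ ≤ M₁ + M₂ := add_le_add (hM₁ _) (hM₂ _)
    have hBb : BddAbove (Set.range fun s : unitInterval =>
        |(σ₁ (γ' s) : ℝ) - (σ₂ s : ℝ)|) := by
      refine ⟨2, ?_⟩
      rintro y ⟨s, rfl⟩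
      have h1 := (σ₁ (γ' s)).2.1; have h2 := (σ₁ (γ' s)).2.2
      have h3 := (σ₂ s).2.1; have h4 := (σ₂ s).2.2
      rw [abs_le]
      constructor <;> linarith
    refine ⟨γ', hγ', fun s => ?_, fun s => ?_⟩
    · exact (le_ciSup hAb s).trans (by linarith)
    · exact (le_ciSup hBb s).trans (by linarith)
  choose g hg hgF hgσ using key
  -- the candidate homeomorphism
  have hb1 : Function.Bijective σ₁ := ⟨hs₁.injective, hσ₁.2.2⟩
  have hb2 : Function.Bijective σ₂ := ⟨hs₂.injective, hσ₂.2.2⟩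
  set e₁ : unitInterval ≃ unitInterval := Equiv.ofBijective σ₁ hb1 with he₁
  set e₂ : unitInterval ≃ unitInterval := Equiv.ofBijective σ₂ hb2 with he₂
  have hcont1 : Continuous (⇑e₁.symm) :=
    (Continuous.homeoOfEquivCompactToT2 (f := e₁) hσ₁.1).symm.continuous
  have hcont2 : Continuous (⇑e₂.symm) :=
    (Continuous.homeoOfEquivCompactToT2 (f := e₂) hσ₂.1).symm.continuous
  set γ : unitInterval → unitInterval := fun s => e₁.symm (σ₂ s) with hγdef
  have hsymm1 : ∀ y, e₁.symm (σ₁ y) = y := fun y => e₁.symm_apply_apply y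
  have hsymm2 : ∀ y, e₂.symm (σ₂ y) = y := fun y => e₂.symm_apply_apply y
  have hcomp : ∀ s, σ₁ (γ s) = σ₂ s := fun s => e₁.apply_symm_apply (σ₂ s)
  have hγcont : Continuous γ := hcont1.comp hσ₂.1
  have hγmono : StrictMono γ := by
    intro a b hab
    have h2 : σ₁ (γ a) < σ₁ (γ b) := by rw [hcomp, hcomp]; exact hs₂ hab
    exact hs₁.lt_iff_lt.mp h2
  have hγbij : Function.Bijective γ := e₁.symm.bijective.comp hb2
  refine ⟨γ, ⟨hγcont, hγmono, hγbij⟩, ?_, funext fun s => (hcomp s).symm⟩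
  -- F₂ = F₁ ∘ γ
  funext t
  -- b n : preimage of γ t under g n
  have hsurj : ∀ n : ℕ, ∃ b, g n b = γ t := fun n => (hg n).2.2.2 (γ t)
  choose b hb using hsurj
  -- g n t → γ t
  have hgt : Filter.Tendsto (fun n => g n t) atTop (nhds (γ t)) := by
    have h1 : Filter.Tendsto (fun n => σ₁ (g n t)) atTop (nhds (σ₂ t)) :=
      tendsto_unit_of_abs_le _ _ fun n => hgσ n t
    have h2 : Filter.Tendsto (fun n => e₁.symm (σ₁ (g n t))) atTop (nhds (e₁.symm (σ₂ t))) :=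
      (hcont1.tendsto _).comp h1
    simpa only [hsymm1] using h2
  -- b n → t
  have hbt : Filter.Tendsto b atTop (nhds t) := by
    have h1 : Filter.Tendsto (fun n => σ₂ (b n)) atTop (nhds (σ₂ t)) := by
      refine tendsto_unit_of_abs_le _ _ fun n => ?_
      have := hgσ n (b n)
      rw [hb n, hcomp t] at this
      rw [abs_sub_comm]
      exact this
    have h2 : Filter.Tendsto (fun n => e₂.symm (σ₂ (b n))) atTop (nhds (e₂.symm (σ₂ t))) :=
      (hcont2.tendsto _).comp h1
    simpa only [hsymm2] using h2
  -- the sequence s n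
  set u : ℕ → unitInterval := fun n => max t (b n) with hu
  have hut : ∀ n, t ≤ u n := fun n => le_max_left _ _
  have hulim : Filter.Tendsto u atTop (nhds t) := by
    have := Filter.Tendsto.max (tendsto_const_nhds (x := t) (f := atTop)) hbt
    simpa [max_self] using this
  have hgu : ∀ n, g n (u n) = max (g n t) (γ t) := by
    intro n
    have hmm := ((hg n).2.1.monotone).map_max (a := t) (b := b n)
    show g n (max t (b n)) = max (g n t) (γ t)
    rw [hmm, hb n]
  have hgut : ∀ n, γ t ≤ g n (u n) := fun n => (hgu n).symm ▸ le_max_right _ _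
  have hgulim : Filter.Tendsto (fun n => g n (u n)) atTop (nhds (γ t)) := by
    have h1 : Filter.Tendsto (fun n => max (g n t) (γ t)) atTop (nhds (max (γ t) (γ t))) :=
      Filter.Tendsto.max hgt tendsto_const_nhds
    rw [max_self] at h1
    exact h1.congr fun n => (hgu n).symm
  -- limits
  have L1 : Filter.Tendsto (fun n => F₁ (g n (u n))) atTop (nhds (F₁ (γ t))) :=
    cadlag_right_seq F₁ hF₁ (γ t) _ hgut hgulim
  have L2 : Filter.Tendsto (fun n => F₂ (u n)) atTop (nhds (F₂ t)) :=
    cadlag_right_seq F₂ hF₂ t u hut hulim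
  have L3 : Filter.Tendsto (fun n => F₁ (g n (u n)) - F₂ (u n)) atTop (nhds 0) := by
    refine squeeze_zero_norm (fun n => ?_) tendsto_one_div_add_atTop_nhds_zero_nat
    exact hgF n (u n)
  have L4 : Filter.Tendsto (fun n => F₁ (g n (u n)) - F₂ (u n)) atTop
      (nhds (F₁ (γ t) - F₂ t)) := L1.sub L2
  have : F₁ (γ t) - F₂ t = 0 := tendsto_nhds_unique L4 L3
  simp only [Function.comp_apply]
  linarith
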